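/- For any assignment of non-negative values to grid cells and any chain of pairwise non-conflicting segments, there exists a monotone (up/right) lattice path from corner to corner whose total value is at least the sum of the values of all cells covered by the segments in the chain. -/

import Mathlib

/-- A segment: a nonempty consecutive run of cells within a single row or column
of an `m × m` grid. -/
def IsSegment (m : ℕ) (S : Finset (Fin m × Fin m)) : Prop :=
  S.Nonempty ∧
    ((∃ r lo hi : Fin m, S = (Finset.Icc lo hi).image fun c => (r, c)) ∨
     (∃ c lo hi : Fin m, S = (Finset.Icc lo hi).image fun r => (r, c)))

/-- `A` precedes `B`: every cell of `A` is strictly higher and strictly to the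
right of every cell of `B`. -/
def Precedes (m : ℕ) (A B : Finset (Fin m × Fin m)) : Prop :=
  ∀ p ∈ A, ∀ q ∈ B, q.1 < p.1 ∧ q.2 < p.2

/-- A monotone lattice path: starts at the bottom-left corner `(0,0)`, ends at the
top-right corner `(m-1, m-1)`, and each step increases exactly one coordinate by 1. -/
def IsMonotonePath (m k : ℕ) (p : Fin (k + 1) → Fin m × Fin m) : Prop :=
  (p 0).1.val = 0 ∧ (p 0).2.val = 0 ∧
  (p (Fin.last k)).1.val = m - 1 ∧ (p (Fin.last k)).2.val = m - 1 ∧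
  ∀ i : Fin k,
    ((p i.succ).1.val = (p i.castSucc).1.val + 1 ∧ (p i.succ).2 = (p i.castSucc).2) ∨
    ((p i.succ).1 = (p i.castSucc).1 ∧ (p i.succ).2.val = (p i.castSucc).2.val + 1)

/-- For any non-negative weights and any pairwise non-conflicting chain of segments,
some monotone lattice path collects at least the total weight covered by the chain. -/
theorem path_dominates_chain (m : ℕ) (hm : 1 ≤ m) (w : Fin m × Fin m → NNReal)
    (F : Finset (Finset (Fin m × Fin m))) (hseg : ∀ A ∈ F, IsSegment m A)
    (hpair : ∀ A ∈ F, ∀ B ∈ F, A ≠ B → Precedes m A B ∨ Precedes m B A) :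
    ∃ (k : ℕ) (p : Fin (k + 1) → Fin m × Fin m), IsMonotonePath m k p ∧
      ∑ c ∈ F.sup id, w c ≤ ∑ i : Fin (k + 1), w (p i) := by
  classical
  set T : Finset (Fin m × Fin m) := F.sup id with hTdef
  -- the union of the segments is a chain in the componentwise order
  have hchain : ∀ x ∈ T, ∀ y ∈ T,
      (x.1.val ≤ y.1.val ∧ x.2.val ≤ y.2.val) ∨
      (y.1.val ≤ x.1.val ∧ y.2.val ≤ x.2.val) := by
    intro x hx y hy
    obtain ⟨A, hA, hxA⟩ := Finset.mem_sup.mp hx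
    obtain ⟨B, hB, hyB⟩ := Finset.mem_sup.mp hy
    simp only [id] at hxA hyB
    by_cases hAB : A = B
    · subst hAB
      obtain ⟨-, h | h⟩ := hseg A hA
      · obtain ⟨r, lo, hi, rfl⟩ := h
        obtain ⟨c1, -, rfl⟩ := Finset.mem_image.mp hxA
        obtain ⟨c2, -, rfl⟩ := Finset.mem_image.mp hyB
        rcases le_total c1 c2 with h | h
        · exact Or.inl ⟨le_rfl, h⟩
        · exact Or.inr ⟨le_rfl, h⟩
      · obtain ⟨c, lo, hi, rfl⟩ := h
        obtain ⟨r1, -, rfl⟩ := Finset.mem_image.mp hxA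
        obtain ⟨r2, -, rfl⟩ := Finset.mem_image.mp hyB
        rcases le_total r1 r2 with h | h
        · exact Or.inl ⟨h, le_rfl⟩
        · exact Or.inr ⟨h, le_rfl⟩
    · rcases hpair A hA B hB hAB with h | h
      · exact Or.inr ⟨(h x hxA y hyB).1.le, (h x hxA y hyB).2.le⟩
      · exact Or.inl ⟨(h y hyB x hxA).1.le, (h y hyB x hxA).2.le⟩
  set n := m - 1 with hn
  -- the row of the path at time `t`
  set a : ℕ → ℕ := fun t => max (t - n) (T.sup fun q => min q.1.val (t - q.2.val)) with hadef
  have hq1 : ∀ q : Fin m × Fin m, q.1.val ≤ n := fun q => by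
    have := q.1.isLt; omega
  have hq2 : ∀ q : Fin m × Fin m, q.2.val ≤ n := fun q => by
    have := q.2.isLt; omega
  have ha_le_n : ∀ t, t ≤ 2 * n → a t ≤ n := by
    intro t ht
    refine max_le (by omega) (Finset.sup_le fun q _ => le_trans (min_le_left _ _) (hq1 q))
  have ha_le_t : ∀ t, a t ≤ t := by
    intro t
    refine max_le (Nat.sub_le _ _)
      (Finset.sup_le fun q _ => le_trans (min_le_right _ _) (Nat.sub_le _ _))
  have ha_lb : ∀ t, t - n ≤ a t := fun t => le_max_left _ _
  have ha_mono : ∀ t, a t ≤ a (t + 1) := by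
    intro t
    exact max_le_max (by omega)
      (Finset.sup_mono_fun fun q _ => min_le_min le_rfl (by omega))
  have ha_step : ∀ t, a (t + 1) ≤ a t + 1 := by
    intro t
    refine max_le (by have := ha_lb t; omega) (Finset.sup_le fun q hq => ?_)
    have h1 : min q.1.val (t + 1 - q.2.val) ≤ min q.1.val (t - q.2.val) + 1 := by omega
    have h2 : min q.1.val (t - q.2.val) ≤ a t :=
      le_trans (Finset.le_sup (f := fun q => min q.1.val (t - q.2.val)) hq) (le_max_right _ _)
    omega
  have hvisit : ∀ q ∈ T, a (q.1.val + q.2.val) = q.1.val := by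
    intro q hq
    refine le_antisymm (max_le (by have := hq2 q; omega) (Finset.sup_le fun y hy => ?_)) ?_
    · rcases hchain q hq y hy with ⟨h1, h2⟩ | ⟨h1, h2⟩ <;> omega
    · have := Finset.le_sup (f := fun y : Fin m × Fin m =>
        min y.1.val (q.1.val + q.2.val - y.2.val)) hq
      refine le_trans ?_ (le_trans this (le_max_right _ _))
      omega
  have ha0 : a 0 = 0 := by
    refine Nat.le_antisymm (max_le (by omega) (Finset.sup_le fun q _ => by omega)) (Nat.zero_le _)
  have halast : a (2 * n) = n := by
    refine le_antisymm (ha_le_n _ le_rfl) (le_trans (by omega) (le_max_left _ _))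
  have hb1 : ∀ t, t ≤ 2 * n → a t < m := fun t ht => by
    have := ha_le_n t ht; omega
  have hb2 : ∀ t, t ≤ 2 * n → t - a t < m := fun t ht => by
    have := ha_lb t; omega
  set p : Fin (2 * n + 1) → Fin m × Fin m := fun i =>
    (⟨a i.val, hb1 i.val (Nat.lt_succ_iff.mp i.isLt)⟩,
     ⟨i.val - a i.val, hb2 i.val (Nat.lt_succ_iff.mp i.isLt)⟩) with hpdef
  refine ⟨2 * n, p, ⟨?_, ?_, ?_, ?_, ?_⟩, ?_⟩
  · simp [hpdef, ha0]
  · simp [hpdef, ha0]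
  · simp [hpdef, Fin.val_last, halast]
    exact hn
  · simp only [hpdef, Fin.val_last, halast]
    omega
  · intro i
    have hi : i.val < 2 * n := i.isLt
    have hm1 := ha_mono i.val
    have hs1 := ha_step i.val
    have hle := ha_le_t i.val
    simp only [hpdef, Fin.val_succ, Fin.coe_castSucc]
    rcases Nat.lt_or_ge (a i.val) (a (i.val + 1)) with h | h
    · left
      exact ⟨by omega, by simp only [Fin.mk.injEq]; omega⟩
    · right
      exact ⟨by simp only [Fin.mk.injEq]; omega, by omega⟩
  · have hinj : ∀ i ∈ Finset.univ, ∀ j ∈ Finset.univ, p i = p j → i = j := by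
      intro i _ j _ h
      simp only [hpdef, Prod.mk.injEq, Fin.mk.injEq] at h
      have h1 := ha_le_t i.val
      have h2 := ha_le_t j.val
      exact Fin.ext (by omega)
    have hsub : T ⊆ Finset.image p Finset.univ := by
      intro q hq
      refine Finset.mem_image.mpr ⟨⟨q.1.val + q.2.val, by have := hq1 q; have := hq2 q; omega⟩,
        Finset.mem_univ _, ?_⟩
      have hv := hvisit q hq
      simp only [hpdef]
      obtain ⟨q1, q2⟩ := q
      simp only [Prod.mk.injEq, Fin.ext_iff, Fin.val_mk] at hv ⊢
      omega
    calc ∑ c ∈ T, w c ≤ ∑ c ∈ Finset.image p Finset.univ, w c :=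
          Finset.sum_le_sum_of_subset hsub
      _ = ∑ i : Fin (2 * n + 1), w (p i) := Finset.sum_image hinj
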